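/- Let K be a number field. Assume the abc conjecture over K: for every ε > 0 there exists a constant c(ε, K) such that for all a, b, c ∈ K ∖ {0} with a + b = c one has h_K(a:b:c) ≤ (1+ε)·rad(a:b:c) + c(ε, K). Then for every ε with 0 < ε < 1 there exists a real number γ (depending on K, ε and the constants c(·,K), but not on S or on the point) such that for every finite set S of nonzero prime ideals of O_K and every u ∈ K ∖ {0,1} such that both u and 1 − u are S-units, one has h_K(u:1) ≤ (1/(1−ε))·∑_{𝔭 ∈ S} log N(𝔭) + γ. (This is the instance of the paper's Theorem 'abc implies effective Siegel' for the curve U = ℙ¹ ∖ {0,1,∞} over K, with χ(U) = −1.) -/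

import Mathlib

open NumberField IsDedekindDomain

/-- The additive `𝔭`-adic valuation `v_𝔭(x)` of `x ∈ K^×`, extended by `0` at `x = 0`. -/
noncomputable def vIntK (K : Type) [Field K] [NumberField K]
    (v : HeightOneSpectrum (𝓞 K)) (x : K) : ℤ :=
  if h : v.valuation K x = 0 then 0 else -Multiplicative.toAdd (WithZero.unzero h)

/-- `log N(𝔭)`, the logarithm of the absolute norm of the prime ideal `𝔭`. -/
noncomputable def logNormK (K : Type) [Field K] [NumberField K]
    (v : HeightOneSpectrum (𝓞 K)) : ℝ :=
  Real.log (Ideal.absNorm v.asIdeal)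

/-- The relative height `h_K(x₀:x₁:x₂) = ∑_v d_v log max_i |x_i|_v`: the archimedean part is a
sum over the infinite places weighted by the local degrees `mult w`, and at a finite place `𝔭`
one has `d_𝔭 · log max_i |x_i|_𝔭 = (max_i (-v_𝔭(x_i))) · log N(𝔭)`. -/
noncomputable def heightProjK (K : Type) [Field K] [NumberField K] (x₀ x₁ x₂ : K) : ℝ :=
  (∑ w : InfinitePlace K, (w.mult : ℝ) * Real.log (max (w x₀) (max (w x₁) (w x₂))))
    + ∑ᶠ v : HeightOneSpectrum (𝓞 K),
        ((max (-(vIntK K v x₀)) (max (-(vIntK K v x₁)) (-(vIntK K v x₂))) : ℤ) : ℝ)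
          * logNormK K v

/-- The relative height `h_K(u:1) = ∑_v d_v log max (|u|_v, 1)`. -/
noncomputable def height1K (K : Type) [Field K] [NumberField K] (u : K) : ℝ :=
  (∑ w : InfinitePlace K, (w.mult : ℝ) * Real.log (max (w u) 1))
    + ∑ᶠ v : HeightOneSpectrum (𝓞 K), ((max (-(vIntK K v u)) 0 : ℤ) : ℝ) * logNormK K v

/-- The radical `rad(x₀:x₁:x₂) = ∑ log N(𝔭)`, summed over the nonzero prime ideals `𝔭` for
which the set `{v_𝔭(x₀), v_𝔭(x₁), v_𝔭(x₂)}` has at least two elements. -/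
noncomputable def radK (K : Type) [Field K] [NumberField K] (x₀ x₁ x₂ : K) : ℝ :=
  ∑ᶠ v : HeightOneSpectrum (𝓞 K),
    if 2 ≤ ({vIntK K v x₀, vIntK K v x₁, vIntK K v x₂} : Finset ℤ).card
    then logNormK K v else 0

/-- `log d_K`, the logarithm of the absolute value of the discriminant of `K`. -/
noncomputable def logDiscK (K : Type) [Field K] [NumberField K] : ℝ :=
  Real.log |(NumberField.discr K : ℝ)|

lemma vIntK_one (K : Type) [Field K] [NumberField K] (v : HeightOneSpectrum (𝓞 K)) :
    vIntK K v 1 = 0 := by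
  unfold vIntK
  split_ifs with h
  · rfl
  · have h1 := WithZero.coe_unzero h
    have h2 := h1.trans (map_one (v.valuation K))
    have : WithZero.unzero h = (1 : Multiplicative ℤ) := by exact_mod_cast h2
    rw [this]
    rfl

lemma logNormK_nonneg (K : Type) [Field K] [NumberField K] (v : HeightOneSpectrum (𝓞 K)) :
    0 ≤ logNormK K v := by
  apply Real.log_nonneg
  have : Ideal.absNorm v.asIdeal ≠ 0 := by
    simp [Ideal.absNorm_eq_zero_iff, v.ne_bot]
  exact_mod_cast Nat.one_le_iff_ne_zero.mpr this

theorem abc_implies_effective_siegel_numberField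
    (K : Type) [Field K] [NumberField K]
    (c : ℝ → ℝ)
    (habc : ∀ ε : ℝ, 0 < ε → ∀ a b x : K, a ≠ 0 → b ≠ 0 → x ≠ 0 → a + b = x →
      heightProjK K a b x ≤ (1 + ε) * radK K a b x + c ε) :
    ∀ ε : ℝ, 0 < ε → ε < 1 → ∃ γ : ℝ,
      ∀ S : Finset (HeightOneSpectrum (𝓞 K)), ∀ u : K, u ≠ 0 → u ≠ 1 →
        (∀ v : HeightOneSpectrum (𝓞 K), v ∉ S → vIntK K v u = 0) →
        (∀ v : HeightOneSpectrum (𝓞 K), v ∉ S → vIntK K v (1 - u) = 0) →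
        height1K K u ≤ (1 / (1 - ε)) * (∑ v ∈ S, logNormK K v) + γ := by
  intro ε hε hε1
  refine ⟨c (ε / (1 - ε)), ?_⟩
  intro S u hu0 hu1 hSu hS1u
  have h1e : (0:ℝ) < 1 - ε := by linarith
  have hε' : (0:ℝ) < ε / (1 - ε) := div_pos hε h1e
  have h1u : (1:K) - u ≠ 0 := sub_ne_zero.mpr (Ne.symm hu1)
  have habc' := habc _ hε' u (1 - u) 1 hu0 h1u one_ne_zero (by ring)
  -- the finite-place summands
  set f₁ : HeightOneSpectrum (𝓞 K) → ℝ :=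
    fun v => ((max (-(vIntK K v u)) 0 : ℤ) : ℝ) * logNormK K v with hf₁
  set f₂ : HeightOneSpectrum (𝓞 K) → ℝ :=
    fun v => ((max (-(vIntK K v u)) (max (-(vIntK K v (1 - u))) (-(vIntK K v 1))) : ℤ) : ℝ)
      * logNormK K v with hf₂
  have hsupp₁ : Function.support f₁ ⊆ (S : Set (HeightOneSpectrum (𝓞 K))) := by
    intro v hv
    by_contra hvS
    exact hv (by simp [hf₁, hSu v hvS])
  have hsupp₂ : Function.support f₂ ⊆ (S : Set (HeightOneSpectrum (𝓞 K))) := by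
    intro v hv
    by_contra hvS
    exact hv (by simp [hf₂, hSu v hvS, hS1u v hvS, vIntK_one])
  have hsum₁ : ∑ᶠ v, f₁ v = ∑ v ∈ S, f₁ v := finsum_eq_sum_of_support_subset f₁ hsupp₁
  have hsum₂ : ∑ᶠ v, f₂ v = ∑ v ∈ S, f₂ v := finsum_eq_sum_of_support_subset f₂ hsupp₂
  -- step 1: height1K u ≤ heightProjK u (1-u) 1
  have step1 : height1K K u ≤ heightProjK K u (1 - u) 1 := by
    unfold height1K heightProjK
    apply add_le_add
    · apply Finset.sum_le_sum
      intro w _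
      apply mul_le_mul_of_nonneg_left _ (by positivity)
      apply Real.log_le_log (by positivity)
      have h1 : (1:ℝ) ≤ max (w (1 - u)) (w 1) := by
        rw [show w (1:K) = 1 from map_one w]
        exact le_max_right _ _
      exact max_le_max le_rfl h1
    · rw [hsum₁, hsum₂]
      apply Finset.sum_le_sum
      intro v _
      apply mul_le_mul_of_nonneg_right _ (logNormK_nonneg K v)
      have : (max (-(vIntK K v u)) 0 : ℤ) ≤
          max (-(vIntK K v u)) (max (-(vIntK K v (1 - u))) (-(vIntK K v 1))) := by
        apply max_le_max le_rfl
        rw [vIntK_one]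
        exact le_max_right (-(vIntK K v (1 - u))) (0:ℤ)
      exact_mod_cast this
  -- step 2: radK u (1-u) 1 ≤ ∑ v in S, logNormK K v
  have step2 : radK K u (1 - u) 1 ≤ ∑ v ∈ S, logNormK K v := by
    unfold radK
    set g : HeightOneSpectrum (𝓞 K) → ℝ := fun v =>
      if 2 ≤ ({vIntK K v u, vIntK K v (1 - u), vIntK K v 1} : Finset ℤ).card
      then logNormK K v else 0 with hg
    have hsuppg : Function.support g ⊆ (S : Set (HeightOneSpectrum (𝓞 K))) := by
      intro v hv
      by_contra hvS
      exact hv (by simp [hg, hSu v hvS, hS1u v hvS, vIntK_one])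
    rw [finsum_eq_sum_of_support_subset g hsuppg]
    apply Finset.sum_le_sum
    intro v _
    by_cases h : 2 ≤ ({vIntK K v u, vIntK K v (1 - u), vIntK K v 1} : Finset ℤ).card
    · simp [hg, h]
    · simp [hg, h, logNormK_nonneg K v]
  -- combine
  have key : (1:ℝ) + ε / (1 - ε) = 1 / (1 - ε) := by field_simp; ring
  calc height1K K u ≤ heightProjK K u (1 - u) 1 := step1
    _ ≤ (1 + ε / (1 - ε)) * radK K u (1 - u) 1 + c (ε / (1 - ε)) := habc'
    _ ≤ (1 + ε / (1 - ε)) * (∑ v ∈ S, logNormK K v) + c (ε / (1 - ε)) := by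
        have h0 : (0:ℝ) ≤ 1 + ε / (1 - ε) := by linarith
        nlinarith [mul_le_mul_of_nonneg_left step2 h0]
    _ = (1 / (1 - ε)) * (∑ v ∈ S, logNormK K v) + c (ε / (1 - ε)) := by rw [key]
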